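/- Let L be a subdirectly irreducible pk-algebra satisfying T(a)* ∨ C(b) = C(a) ∨ T(b)* for all a, b ∈ L. Then L satisfies a* ≤ C(b) ∨ T(a)* for all a, b ∈ L, and every prime filter P in Body(L) satisfies φ(P) = P. -/
import Mathlib


/-- A pseudocomplemented De Morgan algebra (pm-algebra): a bounded distributive
lattice with a De Morgan involution `dm` and a pseudocomplement `pc`. -/
class PMAlgebra (L : Type*) extends DistribLattice L, BoundedOrder L where
  dm : L → L
  pc : L → L
  dm_dm : ∀ a : L, dm (dm a) = a
  dm_inf : ∀ a b : L, dm (a ⊓ b) = dm a ⊔ dm b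
  pc_iff : ∀ a b : L, a ⊓ b = ⊥ ↔ b ≤ pc a

namespace PMAlgebra

variable {L : Type*} [PMAlgebra L]

/-- A congruence of a pm-algebra. -/
def IsCongruence (θ : L → L → Prop) : Prop :=
  Equivalence θ ∧
  (∀ a b c d : L, θ a b → θ c d → θ (a ⊓ c) (b ⊓ d)) ∧
  (∀ a b c d : L, θ a b → θ c d → θ (a ⊔ c) (b ⊔ d)) ∧
  (∀ a b : L, θ a b → θ (dm a) (dm b)) ∧
  (∀ a b : L, θ a b → θ (pc a) (pc b))

/-- `L` is simple: it has more than one element and its only congruences are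
equality and the total relation. -/
def Simple (L : Type*) [PMAlgebra L] : Prop :=
  Nontrivial L ∧ ∀ θ : L → L → Prop, IsCongruence θ →
    θ = (fun a b => a = b) ∨ θ = (fun _ _ => True)

/-- `L` is subdirectly irreducible: there is a congruence `μ ≠ Eq` contained in
every congruence different from equality. -/
def SubdirectlyIrreducible (L : Type*) [PMAlgebra L] : Prop :=
  ∃ μ : L → L → Prop, IsCongruence μ ∧ μ ≠ (fun a b => a = b) ∧
    ∀ θ : L → L → Prop, IsCongruence θ → θ ≠ (fun a b => a = b) →
      ∀ a b : L, μ a b → θ a b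

/-- A prime filter of the underlying lattice of `L`. -/
def IsPrimeFilter (P : Set L) : Prop :=
  P.Nonempty ∧ P ≠ Set.univ ∧
  (∀ a b : L, a ∈ P → a ≤ b → b ∈ P) ∧
  (∀ a b : L, a ∈ P → b ∈ P → a ⊓ b ∈ P) ∧
  (∀ a b : L, a ⊔ b ∈ P → a ∈ P ∨ b ∈ P)

/-- The Birula–Rasiowa transformation. -/
def phi (P : Set L) : Set L := {a : L | dm a ∉ P}

/-- `P` is a maximal prime filter. -/
def IsMaximalPF (P : Set L) : Prop :=
  IsPrimeFilter P ∧ ∀ Q : Set L, IsPrimeFilter Q → P ⊆ Q → Q = P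

/-- `P` is a minimal prime filter. -/
def IsMinimalPF (P : Set L) : Prop :=
  IsPrimeFilter P ∧ ∀ Q : Set L, IsPrimeFilter Q → Q ⊆ P → Q = P

/-- The body of `L`: prime filters that are neither maximal nor minimal. -/
def body (L : Type*) [PMAlgebra L] : Set (Set L) :=
  {P : Set L | IsPrimeFilter P ∧ ¬ IsMaximalPF P ∧ ¬ IsMinimalPF P}

/-- The prime filter space of `L` is φ-connected. -/
def PhiConnected (L : Type*) [PMAlgebra L] : Prop :=
  ∀ S : Set (Set L), S ⊆ {P : Set L | IsPrimeFilter P} → S.Nonempty →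
    (∀ P Q : Set L, P ∈ S → IsPrimeFilter Q → P ⊆ Q → Q ∈ S) →
    (∀ P Q : Set L, P ∈ S → IsPrimeFilter Q → Q ⊆ P → Q ∈ S) →
    (∀ P : Set L, P ∈ S → phi P ∈ S) →
    S = {P : Set L | IsPrimeFilter P}

/-- The Kleene identity. -/
def Kleene (L : Type*) [PMAlgebra L] : Prop :=
  ∀ a b : L, a ⊓ dm a ≤ b ⊔ dm b

/-- The term `C(x) = (x ∧ x') ∨ (x ∧ x')*`. -/
def C (x : L) : L := (x ⊓ dm x) ⊔ pc (x ⊓ dm x)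

/-- The term `T(x) = C(x) ∧ C(x)'`. -/
def T (x : L) : L := C x ⊓ dm (C x)

end PMAlgebra

open PMAlgebra

section Aux

variable {L : Type*} [PMAlgebra L]

lemma dm_antitone' {a b : L} (h : a ≤ b) : dm b ≤ dm a := by
  have h2 : dm a = dm a ⊔ dm b := by rw [← dm_inf, inf_eq_left.mpr h]
  rw [h2]; exact le_sup_right

lemma dm_sup' (a b : L) : dm (a ⊔ b) = dm a ⊓ dm b := by
  conv_lhs => rw [← dm_dm a, ← dm_dm b, ← dm_inf, dm_dm]

lemma dm_top' : dm (⊤ : L) = ⊥ := by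
  have : dm (⊤ : L) ≤ dm (dm (⊥ : L)) := dm_antitone' le_top
  rw [dm_dm] at this
  exact le_bot_iff.mp this

lemma dm_bot' : dm (⊥ : L) = ⊤ := by
  rw [← dm_top', dm_dm]

lemma inf_pc_bot' (a : L) : a ⊓ pc a = ⊥ := (pc_iff a (pc a)).mpr le_rfl

lemma pc_antitone' {a b : L} (h : a ≤ b) : pc b ≤ pc a := by
  refine (pc_iff a (pc b)).mp (le_bot_iff.mp ?_)
  calc a ⊓ pc b ≤ b ⊓ pc b := inf_le_inf_right _ h
    _ = ⊥ := inf_pc_bot' b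

lemma top_mem_pf {P : Set L} (hP : IsPrimeFilter P) : (⊤ : L) ∈ P := by
  obtain ⟨⟨x, hx⟩, _, hup, _, _⟩ := hP
  exact hup x ⊤ hx le_top

lemma bot_not_mem_pf {P : Set L} (hP : IsPrimeFilter P) : (⊥ : L) ∉ P := by
  obtain ⟨_, hnu, hup, _, _⟩ := hP
  intro h
  exact hnu (Set.eq_univ_iff_forall.mpr fun x => hup ⊥ x h bot_le)

lemma phi_prime {P : Set L} (hP : IsPrimeFilter P) : IsPrimeFilter (phi P) := by
  obtain ⟨hne, hnu, hup, hinf, hpr⟩ := hP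
  refine ⟨⟨⊤, ?_⟩, ?_, ?_, ?_, ?_⟩
  · show dm (⊤ : L) ∉ P
    rw [dm_top']
    exact bot_not_mem_pf ⟨hne, hnu, hup, hinf, hpr⟩
  · intro h
    have : (⊥ : L) ∈ phi P := h ▸ Set.mem_univ ⊥
    have h2 : dm (⊥ : L) ∈ P := by rw [dm_bot']; exact top_mem_pf ⟨hne, hnu, hup, hinf, hpr⟩
    exact this h2
  · intro a b ha hab h
    exact ha (hup (dm b) (dm a) h (dm_antitone' hab))
  · intro a b ha hb h
    rw [dm_inf] at h
    rcases hpr _ _ h with h' | h'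
    · exact ha h'
    · exact hb h'
  · intro a b hab
    by_contra h
    push_neg at h
    obtain ⟨ha, hb⟩ := h
    have ha' : dm a ∈ P := not_not.mp ha
    have hb' : dm b ∈ P := not_not.mp hb
    have : dm (a ⊔ b) ∈ P := by rw [dm_sup']; exact hinf _ _ ha' hb'
    exact hab this

lemma phi_phi' (P : Set L) : phi (phi P) = P := by
  ext a
  simp only [phi, Set.mem_setOf_eq, dm_dm, not_not]

lemma phi_antitone' {P Q : Set L} (h : P ⊆ Q) : phi Q ⊆ phi P :=
  fun _ ha hm => ha (h hm)

/-- Core contradiction lemma. -/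
lemma core_contra (hk : Kleene L)
    (hid : ∀ a b : L, pc (T a) ⊔ C b = C a ⊔ pc (T b))
    {P Q : Set L} (hP : IsPrimeFilter P) (hQ : IsPrimeFilter Q)
    (hPQ : P ⊆ Q) (hQP : Q ≠ P) (hsub : phi P ⊆ P) (hneq : phi P ≠ P) : False := by
  obtain ⟨hne, hnu, hup, hinf, hpr⟩ := hP
  have hPf : IsPrimeFilter P := ⟨hne, hnu, hup, hinf, hpr⟩
  -- get a ∈ P with dm a ∈ P
  obtain ⟨a, haP, haphi⟩ : ∃ a, a ∈ P ∧ a ∉ phi P := by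
    obtain ⟨a, h1, h2⟩ := Set.exists_of_ssubset (hsub.ssubset_of_ne hneq)
    exact ⟨a, h1, h2⟩
  have hda : dm a ∈ P := not_not.mp haphi
  set d := a ⊓ dm a with hd
  have hdP : d ∈ P := hinf _ _ haP hda
  -- d ≤ T a
  have hd_le_dmd : d ≤ dm d := by
    rw [hd, dm_inf, dm_dm]
    exact le_trans inf_le_right le_sup_left
  have hd_le_dmpcd : d ≤ dm (pc d) := by
    have h1 : d ≤ pc d ⊔ dm (pc d) := hk a (pc d)
    have h2 : d = (d ⊓ pc d) ⊔ (d ⊓ dm (pc d)) := by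
      rw [← inf_sup_left, inf_eq_left.mpr h1]
    rw [inf_pc_bot', bot_sup_eq] at h2
    exact h2.le.trans inf_le_right
  have hd_le_T : d ≤ T a := by
    have h1 : d ≤ C a := le_sup_left
    have h2 : d ≤ dm (C a) := by
      rw [C, dm_sup']
      exact le_inf hd_le_dmd hd_le_dmpcd
    exact le_inf h1 h2
  -- pc (T a) ∉ P
  have hpcd_not : pc d ∉ P := by
    intro h
    have : (⊥ : L) ∈ P := by rw [← inf_pc_bot' d]; exact hinf _ _ hdP h
    exact bot_not_mem_pf hPf this
  have hpcT_not : pc (T a) ∉ P := fun h =>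
    hpcd_not (hup _ _ h (pc_antitone' hd_le_T))
  -- ∀ b, C b ∈ P
  have hCb : ∀ b : L, C b ∈ P := by
    intro b
    have hCa : C a ∈ P := hup d (C a) hdP le_sup_left
    have h1 : C a ⊔ pc (T b) ∈ P := hup _ _ hCa le_sup_left
    rw [← hid a b] at h1
    rcases hpr _ _ h1 with h | h
    · exact absurd h hpcT_not
    · exact h
  -- pick q ∈ Q \ P
  obtain ⟨q, hqQ, hqP⟩ := Set.exists_of_ssubset (hPQ.ssubset_of_ne (Ne.symm hQP))
  have hc := hCb q
  have hpcq : pc (q ⊓ dm q) ∈ P := by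
    rcases hpr _ _ hc with h | h
    · exact absurd (hup _ _ h inf_le_left) hqP
    · exact h
  have hdmq : dm q ∉ Q := by
    intro h
    have h1 : q ⊓ dm q ∈ Q := hQ.2.2.2.1 _ _ hqQ h
    have h2 : (⊥ : L) ∈ Q := by
      rw [← inf_pc_bot' (q ⊓ dm q)]
      exact hQ.2.2.2.1 _ _ h1 (hPQ hpcq)
    exact bot_not_mem_pf hQ h2
  have : q ∈ phi Q := hdmq
  exact hqP (hsub (phi_antitone' hPQ this))

end Aux

/-- A subdirectly irreducible pk-algebra satisfying
`T(a)* ∨ C(b) = C(a) ∨ T(b)*` satisfies `a* ≤ C(b) ∨ T(a)*`, and every prime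
filter in its body is a fixed point of `φ`. -/
theorem of_gamma_symmetric {L : Type*} [PMAlgebra L]
    (hk : Kleene L) (hsi : SubdirectlyIrreducible L)
    (hid : ∀ a b : L, pc (T a) ⊔ C b = C a ⊔ pc (T b)) :
    (∀ a b : L, pc a ≤ C b ⊔ pc (T a)) ∧ ∀ P ∈ body L, phi P = P := by
  constructor
  · intro a b
    calc pc a ≤ pc (a ⊓ dm a) := pc_antitone' inf_le_left
      _ ≤ C a := le_sup_right
      _ ≤ C a ⊔ pc (T b) := le_sup_left
      _ = pc (T a) ⊔ C b := (hid a b).symm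
      _ = C b ⊔ pc (T a) := sup_comm _ _
  · rintro P ⟨hP, hnmax, hnmin⟩
    by_contra hne
    -- Kleene comparability: phi P ⊆ P or P ⊆ phi P
    have hcomp : phi P ⊆ P ∨ P ⊆ phi P := by
      by_contra h
      obtain ⟨h1, h2⟩ := not_or.mp h
      rw [Set.not_subset] at h1 h2
      obtain ⟨x, hx1, hx2⟩ := h1
      obtain ⟨y, hy1, hy2⟩ := h2
      have hdy : dm y ∈ P := not_not.mp hy2
      have hdx : dm x ∉ P := hx1
      have h1 : y ⊓ dm y ∈ P := hP.2.2.2.1 _ _ hy1 hdy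
      have h2 : x ⊔ dm x ∈ P := hP.2.2.1 _ _ h1 (hk y x)
      rcases hP.2.2.2.2 _ _ h2 with h | h
      · exact hx2 h
      · exact hdx h
    rcases hcomp with hsub | hsub
    · -- phi P ⊊ P; use non-maximality
      have hQ : ∃ Q : Set L, IsPrimeFilter Q ∧ P ⊆ Q ∧ Q ≠ P := by
        by_contra h
        push_neg at h
        exact hnmax ⟨hP, fun Q hQ hPQ => h Q hQ hPQ⟩
      obtain ⟨Q, hQpf, hPQ, hQP⟩ := hQ
      exact core_contra hk hid hP hQpf hPQ hQP hsub hne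
    · -- P ⊊ phi P; apply core to phi P
      have hR : ∃ R : Set L, IsPrimeFilter R ∧ R ⊆ P ∧ R ≠ P := by
        by_contra h
        push_neg at h
        exact hnmin ⟨hP, fun R hRpf hRP => h R hRpf hRP⟩
      obtain ⟨R, hRpf, hRP, hRne⟩ := hR
      have hphiP : IsPrimeFilter (phi P) := phi_prime hP
      have hphiR : IsPrimeFilter (phi R) := phi_prime hRpf
      have h1 : phi P ⊆ phi R := phi_antitone' hRP
      have h2 : phi R ≠ phi P := by
        intro h
        apply hRne
        rw [← phi_phi' R, h, phi_phi']
      have h3 : phi (phi P) ⊆ phi P := by rw [phi_phi']; exact hsub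
      have h4 : phi (phi P) ≠ phi P := by
        rw [phi_phi']
        exact fun h => hne h.symm
      exact core_contra hk hid hphiP hphiR h1 h2 h3 h4
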